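/- arXiv:math-ph/0604033 — 5 statements merged into one kernel-verified Lean document; each statement's English description precedes it below -/
import Mathlib

section
/- Let A be a 2×2 complex matrix with entries a_{ij} (i,j = 1,2) such that Im A is positive definite. Then the integral over (v₁,v₂) ∈ ℝ² of det(Im[(diag(v₁,v₂) − A)⁻¹]) equals π² · det(Im A) / √( (det Im A)² + (1/2)(det Im A)(|a₁₂|² + |a₂₁|²) + (1/16)(|a₁₂|² − |a₂₁|²)² ). -/
open MeasureTheory Matrix Real ComplexOrder

/-- The (operator) imaginary part of a complex matrix: `Im C = (C - Cᴴ)/(2i)`. -/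
noncomputable def matIm {m : Type*} (C : Matrix m m ℂ) : Matrix m m ℂ :=
  (2 * Complex.I)⁻¹ • (C - Cᴴ)

lemma integrable_inv_sq_add_sq' {m : ℝ} (hm : 0 < m) :
    Integrable fun x : ℝ => (x ^ 2 + m ^ 2)⁻¹ := by
  have h : Integrable fun x : ℝ => ((m * x) ^ 2 + m ^ 2)⁻¹ := by
    have : (fun x : ℝ => ((m * x) ^ 2 + m ^ 2)⁻¹)
        = fun x : ℝ => (m ^ 2)⁻¹ * (1 + x ^ 2)⁻¹ := by
      funext x
      rw [← mul_inv]
      congr 1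
      ring
    rw [this]
    exact integrable_inv_one_add_sq.const_mul _
  exact (integrable_comp_mul_left_iff (fun y : ℝ => (y ^ 2 + m ^ 2)⁻¹) hm.ne').1 h

lemma integral_inv_sq_add_sq' {m : ℝ} (hm : 0 < m) :
    ∫ x : ℝ, (x ^ 2 + m ^ 2)⁻¹ = π / m := by
  have h := Measure.integral_comp_mul_left (fun y : ℝ => (y ^ 2 + m ^ 2)⁻¹) m
  have h2 : (fun x : ℝ => ((m * x) ^ 2 + m ^ 2)⁻¹)
      = fun x : ℝ => (m ^ 2)⁻¹ * (1 + x ^ 2)⁻¹ := by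
    funext x; rw [← mul_inv]; congr 1; ring
  rw [h2] at h
  rw [integral_const_mul, integral_univ_inv_one_add_sq] at h
  rw [abs_of_pos (inv_pos.2 hm), smul_eq_mul] at h
  field_simp at h ⊢
  nlinarith [hm, pi_pos]

lemma quadratic_eq_shift' {a b c : ℝ} (ha : 0 < a) (hd : 0 < 4 * a * c - b ^ 2) (x : ℝ) :
    a * x ^ 2 + b * x + c
      = a * ((x + b / (2 * a)) ^ 2 + (Real.sqrt (4 * a * c - b ^ 2) / (2 * a)) ^ 2) := by
  have hs : Real.sqrt (4 * a * c - b ^ 2) ^ 2 = 4 * a * c - b ^ 2 := Real.sq_sqrt hd.le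
  have hs2 : Real.sqrt (a * c * 4 - b ^ 2) ^ 2 = a * c * 4 - b ^ 2 := by
    rw [show a * c * 4 - b ^ 2 = 4 * a * c - b ^ 2 by ring]; exact hs
  field_simp
  nlinarith [hs, hs2]

lemma integrable_inv_quadratic' {a b c : ℝ} (ha : 0 < a) (hd : 0 < 4 * a * c - b ^ 2) :
    Integrable fun x : ℝ => (a * x ^ 2 + b * x + c)⁻¹ := by
  set m := Real.sqrt (4 * a * c - b ^ 2) / (2 * a) with hm
  have hmpos : 0 < m := div_pos (Real.sqrt_pos.2 hd) (by linarith)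
  have heq : (fun x : ℝ => (a * x ^ 2 + b * x + c)⁻¹)
      = fun x : ℝ => a⁻¹ * (((x + b / (2 * a)) ^ 2 + m ^ 2)⁻¹) := by
    funext x
    rw [quadratic_eq_shift' ha hd, mul_inv]
  rw [heq]
  exact (((integrable_inv_sq_add_sq' hmpos).comp_add_right (b / (2 * a)))).const_mul _

lemma integral_inv_quadratic' {a b c : ℝ} (ha : 0 < a) (hd : 0 < 4 * a * c - b ^ 2) :
    ∫ x : ℝ, (a * x ^ 2 + b * x + c)⁻¹ = 2 * π / Real.sqrt (4 * a * c - b ^ 2) := by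
  set m := Real.sqrt (4 * a * c - b ^ 2) / (2 * a) with hm
  have hmpos : 0 < m := div_pos (Real.sqrt_pos.2 hd) (by linarith)
  have heq : (fun x : ℝ => (a * x ^ 2 + b * x + c)⁻¹)
      = fun x : ℝ => a⁻¹ * (((x + b / (2 * a)) ^ 2 + m ^ 2)⁻¹) := by
    funext x
    rw [quadratic_eq_shift' ha hd, mul_inv]
  rw [heq, integral_const_mul,
    integral_add_right_eq_self (fun y : ℝ => (y ^ 2 + m ^ 2)⁻¹) (b / (2 * a)),
    integral_inv_sq_add_sq' hmpos, hm]
  rw [div_div_eq_mul_div, eq_div_iff (Real.sqrt_pos.2 hd).ne']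
  have hs2 : Real.sqrt (a * c * 4 - b ^ 2) ≠ 0 := by
    rw [show a * c * 4 - b ^ 2 = 4 * a * c - b ^ 2 by ring]; exact (Real.sqrt_pos.2 hd).ne'
  field_simp
  ring_nf
  exact mul_inv_cancel₀ hs2

lemma aux_ne_zero' (a00 a01 a10 a11 : ℂ)
    (hβ : 0 < a00.im) (hδ : 0 < a11.im)
    (hD : 0 < 4 * a00.im * a11.im * (a00.im * a11.im + (a01 * a10).re) - (a01 * a10).im ^ 2)
    (x y : ℝ) :
    ((x : ℂ) - a00) * ((y : ℂ) - a11) - a01 * a10 ≠ 0 := by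
  intro h
  set β := a00.im with hβdef
  set δ := a11.im with hδdef
  set al := a00.re with haldef
  set p₁ := (a01 * a10).re with hp1def
  set p₂ := (a01 * a10).im with hp2def
  have hg_pos : 0 < δ * x ^ 2 + (p₂ - 2 * δ * al) * x
      + (δ * al ^ 2 - p₂ * al + δ * β ^ 2 + β * p₁) := by
    nlinarith [sq_nonneg (δ * x + (p₂ - 2 * δ * al) / 2), hδ, hD]
  have h2 : ((((x : ℂ) - a00) * ((y : ℂ) - a11) - a01 * a10)
      * (starRingEnd ℂ) ((x : ℂ) - a00)).im
      = -(δ * x ^ 2 + (p₂ - 2 * δ * al) * x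
        + (δ * al ^ 2 - p₂ * al + δ * β ^ 2 + β * p₁)) := by
    simp only [Complex.mul_im, Complex.mul_re, Complex.sub_re, Complex.sub_im,
      Complex.conj_re, Complex.conj_im, Complex.ofReal_re, Complex.ofReal_im,
      hp1def, hp2def, ← hβdef, ← hδdef, ← haldef]
    ring
  rw [h, zero_mul] at h2
  simp at h2
  linarith

lemma aux_integral' (a00 a01 a10 a11 : ℂ) (C : ℝ) (hC : 0 ≤ C)
    (hβ : 0 < a00.im) (hδ : 0 < a11.im)
    (hD : 0 < 4 * a00.im * a11.im * (a00.im * a11.im + (a01 * a10).re) - (a01 * a10).im ^ 2) :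
    ∫ p : ℝ × ℝ, C / Complex.normSq (((p.1 : ℂ) - a00) * ((p.2 : ℂ) - a11) - a01 * a10)
      = C * (2 * π ^ 2) / Real.sqrt
          (4 * a00.im * a11.im * (a00.im * a11.im + (a01 * a10).re) - (a01 * a10).im ^ 2) := by
  set β := a00.im with hβdef
  set δ := a11.im with hδdef
  set al := a00.re with haldef
  set p₁ := (a01 * a10).re with hp1def
  set p₂ := (a01 * a10).im with hp2def
  set D := 4 * β * δ * (β * δ + p₁) - p₂ ^ 2 with hDdef
  have hD' : 0 < D := hD
  set g : ℝ → ℝ := fun x => δ * x ^ 2 + (p₂ - 2 * δ * al) * x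
      + (δ * al ^ 2 - p₂ * al + δ * β ^ 2 + β * p₁) with hgdef
  have hdiscx : 4 * δ * (δ * al ^ 2 - p₂ * al + δ * β ^ 2 + β * p₁)
      - (p₂ - 2 * δ * al) ^ 2 = D := by rw [hDdef]; ring
  have hg_pos : ∀ x : ℝ, 0 < g x := by
    intro x
    have h := hD'
    rw [← hdiscx] at h
    have hgx : g x = δ * x ^ 2 + (p₂ - 2 * δ * al) * x
        + (δ * al ^ 2 - p₂ * al + δ * β ^ 2 + β * p₁) := rfl
    rw [hgx]
    nlinarith [sq_nonneg (δ * x + (p₂ - 2 * δ * al) / 2), hδ]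
  set u : ℝ → ℂ := fun x => (x : ℂ) - a00 with hudef
  set w : ℝ → ℂ := fun x => u x * a11 + a01 * a10 with hwdef
  set q : ℝ → ℝ → ℂ := fun x y => u x * (y : ℂ) - w x with hqdef
  set aa : ℝ → ℝ := fun x => Complex.normSq (u x) with haadef
  set bb : ℝ → ℝ := fun x => -(2 * ((starRingEnd ℂ) (u x) * w x).re) with hbbdef
  set cc : ℝ → ℝ := fun x => Complex.normSq (w x) with hccdef
  have hqN : ∀ x y : ℝ, Complex.normSq (q x y) = aa x * y ^ 2 + bb x * y + cc x := by
    intro x y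
    simp only [hqdef, haadef, hbbdef, hccdef, hwdef, hudef, Complex.normSq_apply,
      Complex.sub_re, Complex.sub_im, Complex.add_re, Complex.add_im,
      Complex.mul_re, Complex.mul_im, Complex.ofReal_re, Complex.ofReal_im,
      Complex.conj_re, Complex.conj_im]
    ring
  have haa_pos : ∀ x : ℝ, 0 < aa x := by
    intro x
    rw [haadef]
    apply Complex.normSq_pos.2
    intro h
    have h2 : (u x).im = -β := by rw [hudef]; simp [hβdef]
    rw [h] at h2
    simp at h2
    linarith
  have hIm : ∀ x : ℝ, ((starRingEnd ℂ) (u x) * w x).im = g x := by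
    intro x
    simp only [hwdef, hudef, hgdef, Complex.mul_im, Complex.mul_re, Complex.add_re,
      Complex.add_im, Complex.sub_re, Complex.sub_im, Complex.conj_re, Complex.conj_im,
      Complex.ofReal_re, Complex.ofReal_im, hp1def, hp2def, Complex.mul_re, Complex.mul_im]
    ring
  have hdiscy : ∀ x : ℝ, 4 * aa x * cc x - (bb x) ^ 2 = (2 * g x) ^ 2 := by
    intro x
    rw [← hIm x]
    simp only [haadef, hbbdef, hccdef, Complex.normSq_apply, Complex.mul_im, Complex.mul_re,
      Complex.conj_re, Complex.conj_im]
    ring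
  have hdiscy_pos : ∀ x : ℝ, 0 < 4 * aa x * cc x - (bb x) ^ 2 := by
    intro x
    rw [hdiscy x]
    have := hg_pos x
    positivity
  have hq_pos : ∀ x y : ℝ, 0 < Complex.normSq (q x y) := by
    intro x y
    rw [hqN x y]
    nlinarith [hdiscy_pos x, haa_pos x, sq_nonneg (2 * aa x * y + bb x)]
  have hinner_int : ∀ x : ℝ, Integrable fun y : ℝ => C / Complex.normSq (q x y) := by
    intro x
    have heq : (fun y : ℝ => C / Complex.normSq (q x y))
        = fun y : ℝ => C * (aa x * y ^ 2 + bb x * y + cc x)⁻¹ := by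
      funext y; rw [hqN x y, div_eq_mul_inv]
    rw [heq]
    exact (integrable_inv_quadratic' (haa_pos x) (hdiscy_pos x)).const_mul _
  have hinner : ∀ x : ℝ, ∫ y : ℝ, C / Complex.normSq (q x y) = C * π / g x := by
    intro x
    have heq : (fun y : ℝ => C / Complex.normSq (q x y))
        = fun y : ℝ => C * (aa x * y ^ 2 + bb x * y + cc x)⁻¹ := by
      funext y; rw [hqN x y, div_eq_mul_inv]
    rw [heq, integral_const_mul, integral_inv_quadratic' (haa_pos x) (hdiscy_pos x),
      hdiscy x, Real.sqrt_sq (by linarith [hg_pos x])]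
    have hgx := (hg_pos x).ne'
    field_simp
  have houter_int : Integrable fun x : ℝ => C * π / g x := by
    have heq : (fun x : ℝ => C * π / g x) = fun x : ℝ => (C * π) * (δ * x ^ 2
        + (p₂ - 2 * δ * al) * x + (δ * al ^ 2 - p₂ * al + δ * β ^ 2 + β * p₁))⁻¹ := by
      funext x; rw [div_eq_mul_inv]
    rw [heq]
    exact (integrable_inv_quadratic' hδ (by rw [hdiscx]; exact hD')).const_mul _
  have houter : ∫ x : ℝ, C * π / g x = C * π * (2 * π / Real.sqrt D) := by
    have heq : (fun x : ℝ => C * π / g x) = fun x : ℝ => (C * π) * (δ * x ^ 2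
        + (p₂ - 2 * δ * al) * x + (δ * al ^ 2 - p₂ * al + δ * β ^ 2 + β * p₁))⁻¹ := by
      funext x; rw [div_eq_mul_inv]
    rw [heq, integral_const_mul, integral_inv_quadratic' hδ (by rw [hdiscx]; exact hD'), hdiscx]
  have hcont : Continuous fun p : ℝ × ℝ => C / Complex.normSq (q p.1 p.2) := by
    apply Continuous.div continuous_const
    · apply Complex.continuous_normSq.comp
      apply Continuous.sub
      · exact ((Complex.continuous_ofReal.comp continuous_fst).sub continuous_const).mul
          (Complex.continuous_ofReal.comp continuous_snd)
      · exact ((Complex.continuous_ofReal.comp continuous_fst).sub continuous_const).mul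
          continuous_const |>.add continuous_const
    · intro p
      exact (hq_pos p.1 p.2).ne'
  have hnonneg : ∀ p : ℝ × ℝ, 0 ≤ C / Complex.normSq (q p.1 p.2) := by
    intro p
    exact div_nonneg hC (Complex.normSq_nonneg _)
  have key : ∫ p : ℝ × ℝ, C / Complex.normSq (q p.1 p.2)
      = C * π * (2 * π / Real.sqrt D) := by
    rw [MeasureTheory.integral_eq_lintegral_of_nonneg_ae
      (Filter.Eventually.of_forall hnonneg) hcont.aestronglyMeasurable]
    rw [MeasureTheory.Measure.volume_eq_prod, MeasureTheory.lintegral_prod _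
      (by exact (ENNReal.continuous_ofReal.comp hcont).aemeasurable)]
    have hin : ∀ x : ℝ, ∫⁻ y : ℝ, ENNReal.ofReal (C / Complex.normSq (q x y))
        = ENNReal.ofReal (C * π / g x) := by
      intro x
      rw [← MeasureTheory.ofReal_integral_eq_lintegral_ofReal (hinner_int x)
        (Filter.Eventually.of_forall fun y => hnonneg (x, y)), hinner x]
    simp_rw [hin]
    rw [← MeasureTheory.ofReal_integral_eq_lintegral_ofReal houter_int
      (Filter.Eventually.of_forall fun x => div_nonneg (by positivity) (hg_pos x).le), houter,
      ENNReal.toReal_ofReal (by positivity)]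
  have hqe : ∀ x y : ℝ, ((x : ℂ) - a00) * ((y : ℂ) - a11) - a01 * a10 = q x y := by
    intro x y
    rw [hqdef, hudef, hwdef]
    ring
  simp_rw [hqe]
  rw [key]
  have hsD : 0 < Real.sqrt D := Real.sqrt_pos.2 hD'
  field_simp

lemma matIm_inv_det_re' (A : Matrix (Fin 2) (Fin 2) ℂ) (v : Fin 2 → ℝ)
    (hq : (Matrix.diagonal (fun i => (v i : ℂ)) - A).det ≠ 0) :
    ((matIm ((Matrix.diagonal (fun i => (v i : ℂ)) - A)⁻¹)).det).re
      = ((matIm A).det).re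
        / Complex.normSq ((Matrix.diagonal (fun i => (v i : ℂ)) - A).det) := by
  set M := Matrix.diagonal (fun i => (v i : ℂ)) - A with hM
  have hstar : (star fun i => (v i : ℂ)) = fun i => (v i : ℂ) := by
    funext i; exact Complex.conj_ofReal _
  have hMH : Mᴴ = Matrix.diagonal (fun i => (v i : ℂ)) - Aᴴ := by
    rw [hM, conjTranspose_sub, diagonal_conjTranspose, hstar]
  have hdetH : Mᴴ.det ≠ 0 := by
    rw [Matrix.det_conjTranspose]
    simpa using hq
  have hsub : Mᴴ - M = A - Aᴴ := by rw [hMH, hM]; abel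
  have hinvH : Mᴴ⁻¹ = M⁻¹ᴴ := (Matrix.conjTranspose_nonsing_inv M).symm
  have hkey : matIm (M⁻¹) = M⁻¹ * matIm A * M⁻¹ᴴ := by
    have h1 : M⁻¹ - M⁻¹ᴴ = M⁻¹ * (Mᴴ - M) * Mᴴ⁻¹ := by
      rw [Matrix.mul_sub, Matrix.sub_mul, Matrix.mul_assoc M⁻¹ Mᴴ Mᴴ⁻¹,
        Matrix.mul_nonsing_inv _ (isUnit_iff_ne_zero.2 hdetH), Matrix.mul_one,
        Matrix.nonsing_inv_mul _ (isUnit_iff_ne_zero.2 hq), Matrix.one_mul, hinvH]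
    rw [matIm, h1, hsub, matIm, ← hinvH]
    rw [Matrix.mul_smul, Matrix.smul_mul, hinvH]
  have hdet : (matIm (M⁻¹)).det = ((Complex.normSq M.det : ℝ) : ℂ)⁻¹ * (matIm A).det := by
    rw [hkey, Matrix.det_mul, Matrix.det_mul, Matrix.det_conjTranspose,
      Matrix.det_nonsing_inv, Ring.inverse_eq_inv]
    have h2 : M.det⁻¹ * (matIm A).det * star M.det⁻¹
        = (M.det * star M.det)⁻¹ * (matIm A).det := by
      rw [star_inv₀, mul_inv]; ring
    rw [h2, Complex.star_def, Complex.mul_conj]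
  rw [hdet, ← Complex.ofReal_inv, Complex.re_ofReal_mul, div_eq_inv_mul]

theorem integral_det_im_inv_two_by_two
    (A : Matrix (Fin 2) (Fin 2) ℂ) (hA : (matIm A).PosDef) :
    (∫ v : Fin 2 → ℝ,
        ((matIm ((Matrix.diagonal (fun i => (v i : ℂ)) - A)⁻¹)).det).re)
      = π ^ 2 * ((matIm A).det).re /
        Real.sqrt (((matIm A).det).re ^ 2
          + (1/2) * ((matIm A).det).re *
              (‖A 0 1‖ ^ 2 + ‖A 1 0‖ ^ 2)
          + (1/16) * (‖A 0 1‖ ^ 2 - ‖A 1 0‖ ^ 2) ^ 2) := by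
  -- positivity of the diagonal imaginary parts
  have hdiag : ∀ i : Fin 2, matIm A i i = ((A i i).im : ℂ) := by
    intro i
    simp only [matIm, Matrix.smul_apply, Matrix.sub_apply, Matrix.conjTranspose_apply]
    simp [Complex.ext_iff, Complex.mul_re, Complex.mul_im]
    ring
  have hsingle : ∀ i : Fin 2, 0 < matIm A i i := by
    intro i
    have h := hA.dotProduct_mulVec_pos (x := Pi.single i 1) (by
      intro h
      have := congrFun h i
      simp at this)
    fin_cases i <;>
      simpa [dotProduct, Fin.sum_univ_two, Pi.single_apply, Matrix.mulVec, Fin.isValue] using h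
  have hβ : 0 < (A 0 0).im := by
    have := hsingle 0; rw [hdiag 0] at this; exact_mod_cast this
  have hδ : 0 < (A 1 1).im := by
    have := hsingle 1; rw [hdiag 1] at this; exact_mod_cast this
  have hC : 0 < ((matIm A).det).re := by
    have h := hA.det_pos
    rw [Complex.lt_def] at h
    simpa using h.1
  -- entrywise formulas
  have h2I : (2 * Complex.I)⁻¹ = -(2⁻¹) * Complex.I := by
    rw [mul_inv, Complex.inv_I]; ring
  have hCf : ((matIm A).det).re = (A 0 0).im * (A 1 1).im
      - (((A 0 1).re - (A 1 0).re) ^ 2 + ((A 0 1).im + (A 1 0).im) ^ 2) / 4 := by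
    simp only [matIm, Matrix.det_fin_two, Matrix.smul_apply, Matrix.sub_apply,
      Matrix.conjTranspose_apply, h2I]
    simp [Complex.mul_re, Complex.mul_im, Complex.sub_re, Complex.sub_im,
      Complex.conj_re, Complex.conj_im]
    ring
  have habs1 : ‖A 0 1‖ ^ 2 = (A 0 1).re ^ 2 + (A 0 1).im ^ 2 := by
    rw [Complex.sq_norm, Complex.normSq_apply]; ring
  have habs2 : ‖A 1 0‖ ^ 2 = (A 1 0).re ^ 2 + (A 1 0).im ^ 2 := by
    rw [Complex.sq_norm, Complex.normSq_apply]; ring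
  have hp1f : (A 0 1 * A 1 0).re = (A 0 1).re * (A 1 0).re - (A 0 1).im * (A 1 0).im :=
    Complex.mul_re _ _
  have hp2f : (A 0 1 * A 1 0).im = (A 0 1).re * (A 1 0).im + (A 0 1).im * (A 1 0).re :=
    Complex.mul_im _ _
  set R := ((matIm A).det).re ^ 2
      + (1/2) * ((matIm A).det).re * (‖A 0 1‖ ^ 2 + ‖A 1 0‖ ^ 2)
      + (1/16) * (‖A 0 1‖ ^ 2 - ‖A 1 0‖ ^ 2) ^ 2 with hRdef
  have hDR : 4 * (A 0 0).im * (A 1 1).im * ((A 0 0).im * (A 1 1).im + (A 0 1 * A 1 0).re)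
      - (A 0 1 * A 1 0).im ^ 2 = 4 * R := by
    rw [hRdef, habs1, habs2, hp1f, hp2f, hCf]; ring
  have hR : 0 < R := by
    rw [hRdef]
    nlinarith [sq_nonneg (‖A 0 1‖ ^ 2 - ‖A 1 0‖ ^ 2), hC,
      sq_nonneg (‖A 0 1‖), sq_nonneg (‖A 1 0‖)]
  have hD : 0 < 4 * (A 0 0).im * (A 1 1).im
      * ((A 0 0).im * (A 1 1).im + (A 0 1 * A 1 0).re) - (A 0 1 * A 1 0).im ^ 2 := by
    rw [hDR]; linarith
  -- determinant formula
  have hdetf : ∀ v : Fin 2 → ℝ, (Matrix.diagonal (fun i => (v i : ℂ)) - A).det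
      = ((v 0 : ℂ) - A 0 0) * ((v 1 : ℂ) - A 1 1) - A 0 1 * A 1 0 := by
    intro v
    simp [Matrix.det_fin_two, Matrix.diagonal]
  -- pointwise formula for the integrand
  have hpt : ∀ v : Fin 2 → ℝ,
      ((matIm ((Matrix.diagonal (fun i => (v i : ℂ)) - A)⁻¹)).det).re
        = ((matIm A).det).re
          / Complex.normSq (((v 0 : ℂ) - A 0 0) * ((v 1 : ℂ) - A 1 1) - A 0 1 * A 1 0) := by
    intro v
    rw [← hdetf v]
    apply matIm_inv_det_re'
    rw [hdetf v]
    exact aux_ne_zero' _ _ _ _ hβ hδ hD (v 0) (v 1)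
  calc (∫ v : Fin 2 → ℝ, ((matIm ((Matrix.diagonal (fun i => (v i : ℂ)) - A)⁻¹)).det).re)
      = ∫ v : Fin 2 → ℝ, ((matIm A).det).re
          / Complex.normSq (((v 0 : ℂ) - A 0 0) * ((v 1 : ℂ) - A 1 1) - A 0 1 * A 1 0) := by
        exact integral_congr_ae (Filter.Eventually.of_forall hpt)
    _ = ∫ p : ℝ × ℝ, ((matIm A).det).re
          / Complex.normSq (((p.1 : ℂ) - A 0 0) * ((p.2 : ℂ) - A 1 1) - A 0 1 * A 1 0) := by
        have h := (volume_preserving_finTwoArrow ℝ).integral_comp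
          (MeasurableEquiv.measurableEmbedding _)
          (fun p : ℝ × ℝ => ((matIm A).det).re
            / Complex.normSq (((p.1 : ℂ) - A 0 0) * ((p.2 : ℂ) - A 1 1) - A 0 1 * A 1 0))
        rw [← h]
        rfl
    _ = ((matIm A).det).re * (2 * π ^ 2) / Real.sqrt
          (4 * (A 0 0).im * (A 1 1).im * ((A 0 0).im * (A 1 1).im + (A 0 1 * A 1 0).re)
            - (A 0 1 * A 1 0).im ^ 2) :=
        aux_integral' _ _ _ _ _ hC.le hβ hδ hD
    _ = π ^ 2 * ((matIm A).det).re / Real.sqrt R := by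
        rw [hDR, show (4 : ℝ) * R = 2 ^ 2 * R by ring, Real.sqrt_mul (by norm_num),
          Real.sqrt_sq (by norm_num : (0:ℝ) ≤ 2)]
        have hsR : 0 < Real.sqrt R := Real.sqrt_pos.2 hR
        field_simp
end

section
/- Let A be a 2×2 complex matrix such that Im A is positive definite. Then the integral over (v₁,v₂) ∈ ℝ² of det(Im[(diag(v₁,v₂) − A)⁻¹]) is at most π². -/
open MeasureTheory Matrix Real ComplexOrder

lemma integrable_inv_sq_add (e r : ℝ) (hr : 0 < r) :
    Integrable (fun y : ℝ => ((y - e) ^ 2 + r ^ 2)⁻¹) := by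
  have h1 : Integrable (fun y : ℝ => r⁻¹ ^ 2 * (1 + y ^ 2)⁻¹) :=
    integrable_inv_one_add_sq.const_mul _
  have h2 : Integrable (fun y : ℝ => r⁻¹ ^ 2 * (1 + (r⁻¹ * y) ^ 2)⁻¹) :=
    h1.comp_mul_left' (inv_ne_zero hr.ne')
  have h3 : (fun y : ℝ => r⁻¹ ^ 2 * (1 + (r⁻¹ * y) ^ 2)⁻¹) = fun y : ℝ => (y ^ 2 + r ^ 2)⁻¹ := by
    funext y; field_simp; ring
  rw [h3] at h2
  exact h2.comp_sub_right e

lemma integral_inv_sq_add (e r : ℝ) (hr : 0 < r) :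
    ∫ y : ℝ, ((y - e) ^ 2 + r ^ 2)⁻¹ = π / r := by
  rw [integral_sub_right_eq_self (fun y : ℝ => (y ^ 2 + r ^ 2)⁻¹) e]
  have h3 : (fun y : ℝ => (y ^ 2 + r ^ 2)⁻¹) = fun y : ℝ => r⁻¹ ^ 2 * (1 + (r⁻¹ * y) ^ 2)⁻¹ := by
    funext y; field_simp; ring
  rw [h3, integral_const_mul _ _,
    Measure.integral_comp_mul_left (fun y : ℝ => (1 + y ^ 2)⁻¹) r⁻¹,
    integral_univ_inv_one_add_sq, inv_inv, abs_of_pos hr, smul_eq_mul]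
  field_simp

lemma quad_key (s q c : ℝ) (hs : 0 < s) (hD : 0 < s * c - q ^ 2 / 4) :
    Integrable (fun t : ℝ => (s * t ^ 2 + q * t + c)⁻¹) ∧
      ∫ t : ℝ, (s * t ^ 2 + q * t + c)⁻¹ = π / Real.sqrt (s * c - q ^ 2 / 4) := by
  set e : ℝ := -q / (2 * s) with he
  set r : ℝ := Real.sqrt (s * c - q ^ 2 / 4) / s with hrdef
  have hsq : 0 < Real.sqrt (s * c - q ^ 2 / 4) := Real.sqrt_pos.2 hD
  have hr : 0 < r := div_pos hsq hs
  have hr2 : r ^ 2 = (s * c - q ^ 2 / 4) / s ^ 2 := by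
    rw [hrdef, div_pow, Real.sq_sqrt hD.le]
  have key : (fun t : ℝ => (s * t ^ 2 + q * t + c)⁻¹)
      = fun t : ℝ => s⁻¹ * ((t - e) ^ 2 + r ^ 2)⁻¹ := by
    funext t
    have : s * t ^ 2 + q * t + c = s * ((t - e) ^ 2 + r ^ 2) := by
      rw [hr2, he]; field_simp; ring
    rw [this, mul_inv]
  constructor
  · rw [key]; exact (integrable_inv_sq_add e r hr).const_mul _
  · have hsr : s * r = Real.sqrt (s * c - q ^ 2 / 4) := by
      rw [hrdef]; field_simp
    rw [key, integral_const_mul _ _, integral_inv_sq_add e r hr, ← hsr]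
    field_simp

lemma Qf_pos (s q c : ℝ) (hs : 0 < s) (hD : 0 < s * c - q ^ 2 / 4) (t : ℝ) :
    0 < s * t ^ 2 + q * t + c := by
  nlinarith [sq_nonneg (2 * s * t + q)]

lemma N_fact (α s p q are dre c : ℝ) (hα : 0 < α) (hc : c = s * α ^ 2 + p * α) (x y : ℝ) :
    ((x - are) * (y - dre) - (α * s + p)) ^ 2 + ((x - are) * s + α * (y - dre) + q) ^ 2
      = ((x - are) ^ 2 + α ^ 2) *
        ((y - (dre + (p * (x - are) - q * α) / ((x - are) ^ 2 + α ^ 2))) ^ 2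
          + ((s * (x - are) ^ 2 + q * (x - are) + c) / ((x - are) ^ 2 + α ^ 2)) ^ 2) := by
  subst hc
  have hden : ((x - are) ^ 2 + α ^ 2) ≠ 0 := by positivity
  field_simp
  ring

lemma N_pos (α s p q are dre c : ℝ) (hα : 0 < α) (hs : 0 < s)
    (hc : c = s * α ^ 2 + p * α) (hD : 0 < s * c - q ^ 2 / 4) (x y : ℝ) :
    0 < ((x - are) * (y - dre) - (α * s + p)) ^ 2
        + ((x - are) * s + α * (y - dre) + q) ^ 2 := by
  rw [N_fact α s p q are dre c hα hc x y]
  have hden : 0 < (x - are) ^ 2 + α ^ 2 := by positivity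
  have hQ : 0 < s * (x - are) ^ 2 + q * (x - are) + c := Qf_pos s q c hs hD _
  have h2 : 0 < ((s * (x - are) ^ 2 + q * (x - are) + c) / ((x - are) ^ 2 + α ^ 2)) ^ 2 :=
    pow_pos (div_pos hQ hden) 2
  nlinarith [sq_nonneg (y - (dre + (p * (x - are) - q * α) / ((x - are) ^ 2 + α ^ 2)))]

lemma analysis_aux (α s p q are dre δ : ℝ) (hα : 0 < α) (hs : 0 < s) (hδ : 0 < δ)
    (hkey : δ ^ 2 ≤ s * (s * α ^ 2 + p * α) - q ^ 2 / 4) :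
    (∫ v : Fin 2 → ℝ,
        δ * ((((v 0 - are) * (v 1 - dre) - (α * s + p)) ^ 2
          + ((v 0 - are) * s + α * (v 1 - dre) + q) ^ 2)⁻¹)) ≤ π ^ 2 := by
  have hDpos : 0 < s * (s * α ^ 2 + p * α) - q ^ 2 / 4 :=
    lt_of_lt_of_le (pow_pos hδ 2) hkey
  obtain ⟨hQint, hQval⟩ := quad_key s q (s * α ^ 2 + p * α) hs hDpos
  set G : ℝ × ℝ → ℝ := fun P =>
    δ * ((((P.1 - are) * (P.2 - dre) - (α * s + p)) ^ 2
      + ((P.1 - are) * s + α * (P.2 - dre) + q) ^ 2)⁻¹) with hG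
  have htrans : (∫ v : Fin 2 → ℝ,
      δ * ((((v 0 - are) * (v 1 - dre) - (α * s + p)) ^ 2
        + ((v 0 - are) * s + α * (v 1 - dre) + q) ^ 2)⁻¹)) = ∫ P : ℝ × ℝ, G P :=
    (volume_preserving_piFinTwo (fun _ => ℝ)).integral_comp
      (MeasurableEquiv.measurableEmbedding _) G
  have hden : ∀ x : ℝ, 0 < (x - are) ^ 2 + α ^ 2 := fun x => by positivity
  have hQpos : ∀ t : ℝ, 0 < s * t ^ 2 + q * t + (s * α ^ 2 + p * α) :=
    fun t => Qf_pos s q _ hs hDpos t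
  have hr : ∀ x : ℝ,
      0 < (s * (x - are) ^ 2 + q * (x - are) + (s * α ^ 2 + p * α)) / ((x - are) ^ 2 + α ^ 2) :=
    fun x => div_pos (hQpos _) (hden x)
  have hslice : ∀ x : ℝ, (fun y => G (x, y)) = fun y : ℝ =>
      (δ * ((x - are) ^ 2 + α ^ 2)⁻¹) *
        ((y - (dre + (p * (x - are) - q * α) / ((x - are) ^ 2 + α ^ 2))) ^ 2
          + ((s * (x - are) ^ 2 + q * (x - are) + (s * α ^ 2 + p * α))
              / ((x - are) ^ 2 + α ^ 2)) ^ 2)⁻¹ := by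
    intro x
    funext y
    simp only [hG]
    rw [N_fact α s p q are dre _ hα rfl x y, mul_inv]
    ring
  have hinner_int : ∀ x : ℝ, Integrable (fun y => G (x, y)) := by
    intro x
    rw [hslice x]
    exact (integrable_inv_sq_add _ _ (hr x)).const_mul _
  have hinner_val : ∀ x : ℝ, (∫ y : ℝ, G (x, y))
      = δ * π * (s * (x - are) ^ 2 + q * (x - are) + (s * α ^ 2 + p * α))⁻¹ := by
    intro x
    rw [hslice x, integral_const_mul _ _, integral_inv_sq_add _ _ (hr x)]
    have h1 := (hden x).ne'
    have h2 := (hQpos (x - are)).ne'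
    field_simp
  have hGnonneg : ∀ P : ℝ × ℝ, 0 ≤ G P := by
    intro P
    exact mul_nonneg hδ.le (inv_nonneg.2 (by positivity))
  have hGcont : Continuous G := by
    apply continuous_const.mul
    apply Continuous.inv₀
    · fun_prop
    · intro P
      exact (N_pos α s p q are dre _ hα hs rfl hDpos P.1 P.2).ne'
  have houter_int : Integrable
      (fun x : ℝ => δ * π * (s * (x - are) ^ 2 + q * (x - are) + (s * α ^ 2 + p * α))⁻¹) :=
    (hQint.comp_sub_right are).const_mul (δ * π)
  have hGint : Integrable G ((volume : Measure ℝ).prod (volume : Measure ℝ)) := by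
    refine (integrable_prod_iff hGcont.aestronglyMeasurable).2 ⟨ae_of_all _ hinner_int, ?_⟩
    have hn : (fun x : ℝ => ∫ y : ℝ, ‖G (x, y)‖)
        = fun x : ℝ => δ * π * (s * (x - are) ^ 2 + q * (x - are) + (s * α ^ 2 + p * α))⁻¹ := by
      funext x
      rw [← hinner_val x]
      refine integral_congr_ae (Filter.Eventually.of_forall fun y => ?_)
      exact Real.norm_of_nonneg (hGnonneg _)
    rw [hn]
    exact houter_int
  have hval : (∫ P : ℝ × ℝ, G P)
      = δ * π * (π / Real.sqrt (s * (s * α ^ 2 + p * α) - q ^ 2 / 4)) := by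
    rw [Measure.volume_eq_prod, integral_prod G hGint]
    simp_rw [hinner_val]
    rw [integral_const_mul _ _]
    rw [show (∫ x : ℝ, (s * (x - are) ^ 2 + q * (x - are) + (s * α ^ 2 + p * α))⁻¹)
        = ∫ t : ℝ, (s * t ^ 2 + q * t + (s * α ^ 2 + p * α))⁻¹ from
      integral_sub_right_eq_self (fun t : ℝ => (s * t ^ 2 + q * t + (s * α ^ 2 + p * α))⁻¹) are]
    rw [hQval]
  rw [htrans, hval]
  have hsqrtpos : 0 < Real.sqrt (s * (s * α ^ 2 + p * α) - q ^ 2 / 4) := Real.sqrt_pos.2 hDpos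
  have hsE : δ ≤ Real.sqrt (s * (s * α ^ 2 + p * α) - q ^ 2 / 4) := by
    have h := Real.sqrt_le_sqrt hkey
    rwa [Real.sqrt_sq hδ.le] at h
  calc δ * π * (π / Real.sqrt (s * (s * α ^ 2 + p * α) - q ^ 2 / 4))
      = (π * π) * (δ / Real.sqrt (s * (s * α ^ 2 + p * α) - q ^ 2 / 4)) := by ring
    _ ≤ (π * π) * 1 := by
        refine mul_le_mul_of_nonneg_left ?_ (by positivity)
        rw [div_le_one hsqrtpos]
        exact hsE
    _ = π ^ 2 := by ring

lemma key_ineq (α s ur ui wr wi : ℝ)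
    (hδ : 0 < α * s - ((ur - wr) ^ 2 + (ui + wi) ^ 2) / 4) :
    (α * s - ((ur - wr) ^ 2 + (ui + wi) ^ 2) / 4) ^ 2
      ≤ s * (s * α ^ 2 + (ur * wr - ui * wi) * α) - (ur * wi + ui * wr) ^ 2 / 4 := by
  set m : ℝ := ((ur - wr) ^ 2 + (ui + wi) ^ 2) / 4 with hm
  set S : ℝ := ur ^ 2 + ui ^ 2 + wr ^ 2 + wi ^ 2 with hS
  have h1 : 4 * ((ur * wr - ui * wi) ^ 2 + (ur * wi + ui * wr) ^ 2) ≤ S ^ 2 := by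
    rw [hS]; nlinarith [sq_nonneg (ur ^ 2 + ui ^ 2 - wr ^ 2 - wi ^ 2)]
  have h2 : 4 * m = S - 2 * (ur * wr - ui * wi) := by rw [hm, hS]; ring
  have h2' : 4 * m * (S + 2 * (ur * wr - ui * wi))
      = (S - 2 * (ur * wr - ui * wi)) * (S + 2 * (ur * wr - ui * wi)) := by rw [h2]
  have h3 : (ur * wi + ui * wr) ^ 2 ≤ m * (S + 2 * (ur * wr - ui * wi)) := by
    nlinarith [h1, h2']
  have h4 : m ≤ α * s := by linarith [hδ]
  have hm0 : 0 ≤ m := by rw [hm]; positivity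
  have hS0 : 0 ≤ S := by rw [hS]; positivity
  have h8 : m * (4 * m) = m * (S - 2 * (ur * wr - ui * wi)) := by rw [h2]
  have h5 : m ^ 2 + (ur * wi + ui * wr) ^ 2 / 4 ≤ α * s * S / 2 := by
    nlinarith [h3, h8, mul_le_mul_of_nonneg_right h4 hS0]
  have h7 : α * s * (4 * m) = α * s * (S - 2 * (ur * wr - ui * wi)) := by rw [h2]
  nlinarith [h5, h7]

theorem integral_det_im_inv_two_by_two_le
    (A : Matrix (Fin 2) (Fin 2) ℂ) (hA : (matIm A).PosDef) :
    (∫ v : Fin 2 → ℝ,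
        ((matIm ((Matrix.diagonal (fun i => (v i : ℂ)) - A)⁻¹)).det).re)
      ≤ π ^ 2 := by
  have hentry : ∀ i j, matIm A i j = (2 * Complex.I)⁻¹ * (A i j - (starRingEnd ℂ) (A j i)) := by
    intro i j
    simp [matIm, Matrix.sub_apply, Matrix.conjTranspose_apply, Matrix.smul_apply, smul_eq_mul]
  have him : ∀ z : ℂ, (2 * Complex.I)⁻¹ * (z - (starRingEnd ℂ) z) = (z.im : ℂ) := by
    intro z
    rw [Complex.sub_conj]
    have h2 : (2 : ℂ) * Complex.I ≠ 0 := by simp [Complex.I_ne_zero]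
    field_simp; push_cast; ring
  have h2I : (2 : ℂ) * Complex.I ≠ 0 := by simp [Complex.I_ne_zero]
  -- positivity of the diagonal imaginary parts
  have hα : 0 < (A 0 0).im := by
    have h0 := hA.dotProduct_mulVec_pos (x := (![1, 0] : Fin 2 → ℂ)) (by
      intro h
      have := congrFun h 0
      simp at this)
    simp only [dotProduct, Matrix.mulVec, Fin.sum_univ_two, Matrix.cons_val_zero,
      Matrix.cons_val_one, Matrix.head_cons, Pi.star_apply, star_one, star_zero,
      one_mul, zero_mul, mul_one, mul_zero, add_zero, zero_add] at h0
    rw [hentry 0 0, him] at h0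
    simpa using (Complex.lt_def.1 h0).1
  have hs : 0 < (A 1 1).im := by
    have h0 := hA.dotProduct_mulVec_pos (x := (![0, 1] : Fin 2 → ℂ)) (by
      intro h
      have := congrFun h 1
      simp at this)
    simp only [dotProduct, Matrix.mulVec, Fin.sum_univ_two, Matrix.cons_val_zero,
      Matrix.cons_val_one, Matrix.head_cons, Pi.star_apply, star_one, star_zero,
      one_mul, zero_mul, mul_one, mul_zero, add_zero, zero_add] at h0
    rw [hentry 1 1, him] at h0
    simpa using (Complex.lt_def.1 h0).1
  -- determinant of matIm A
  have hoff : (2 * Complex.I)⁻¹ * (A 0 1 - (starRingEnd ℂ) (A 1 0))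
        * ((2 * Complex.I)⁻¹ * (A 1 0 - (starRingEnd ℂ) (A 0 1)))
      = (((((A 0 1).re - (A 1 0).re) ^ 2 + ((A 0 1).im + (A 1 0).im) ^ 2) / 4 : ℝ) : ℂ) := by
    have hwz : A 1 0 - (starRingEnd ℂ) (A 0 1)
        = -((starRingEnd ℂ) (A 0 1 - (starRingEnd ℂ) (A 1 0))) := by
      rw [map_sub, Complex.conj_conj]; ring
    have hI2 : (2 * Complex.I)⁻¹ * (2 * Complex.I)⁻¹ = (-4 : ℂ)⁻¹ := by
      rw [← mul_inv]
      norm_num [mul_mul_mul_comm, Complex.I_mul_I]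
    have hns2 : ((((A 0 1).re - (A 1 0).re) ^ 2 + ((A 0 1).im + (A 1 0).im) ^ 2) : ℝ)
        = Complex.normSq (A 0 1 - (starRingEnd ℂ) (A 1 0)) := by
      simp only [Complex.normSq_apply, Complex.sub_re, Complex.sub_im, Complex.conj_re,
        Complex.conj_im]
      ring
    rw [hwz]
    calc (2 * Complex.I)⁻¹ * (A 0 1 - (starRingEnd ℂ) (A 1 0))
          * ((2 * Complex.I)⁻¹ * (-((starRingEnd ℂ) (A 0 1 - (starRingEnd ℂ) (A 1 0)))))
        = -(((A 0 1 - (starRingEnd ℂ) (A 1 0))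
            * (starRingEnd ℂ) (A 0 1 - (starRingEnd ℂ) (A 1 0)))
          * ((2 * Complex.I)⁻¹ * (2 * Complex.I)⁻¹)) := by ring
      _ = -((Complex.normSq (A 0 1 - (starRingEnd ℂ) (A 1 0)) : ℂ) * (-4 : ℂ)⁻¹) := by
          rw [Complex.mul_conj, hI2]
      _ = (((((A 0 1).re - (A 1 0).re) ^ 2 + ((A 0 1).im + (A 1 0).im) ^ 2) / 4 : ℝ) : ℂ) := by
          rw [hns2]
          push_cast
          ring
  have hδc : (matIm A).det
      = (((A 0 0).im * (A 1 1).im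
          - (((A 0 1).re - (A 1 0).re) ^ 2 + ((A 0 1).im + (A 1 0).im) ^ 2) / 4 : ℝ) : ℂ) := by
    have hdet2 : (matIm A).det
        = matIm A 0 0 * matIm A 1 1 - matIm A 0 1 * matIm A 1 0 := Matrix.det_fin_two _
    rw [hdet2, hentry 0 0, hentry 1 1, hentry 0 1, hentry 1 0, him, him, hoff]
    push_cast
    ring
  have hδpos : 0 < (A 0 0).im * (A 1 1).im
      - (((A 0 1).re - (A 1 0).re) ^ 2 + ((A 0 1).im + (A 1 0).im) ^ 2) / 4 := by
    have h := hA.det_pos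
    rw [hδc] at h
    have h1 := (Complex.lt_def.1 h).1
    rwa [Complex.zero_re, Complex.ofReal_re] at h1
  have hkey := key_ineq (A 0 0).im (A 1 1).im (A 0 1).re (A 0 1).im (A 1 0).re (A 1 0).im hδpos
  have hp : ((A 0 1) * (A 1 0)).re = (A 0 1).re * (A 1 0).re - (A 0 1).im * (A 1 0).im :=
    Complex.mul_re _ _
  have hq : ((A 0 1) * (A 1 0)).im = (A 0 1).re * (A 1 0).im + (A 0 1).im * (A 1 0).re :=
    Complex.mul_im _ _
  -- the pointwise identity
  have hpoint : ∀ v : Fin 2 → ℝ,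
      ((matIm ((Matrix.diagonal (fun i => (v i : ℂ)) - A)⁻¹)).det).re
        = ((A 0 0).im * (A 1 1).im
            - (((A 0 1).re - (A 1 0).re) ^ 2 + ((A 0 1).im + (A 1 0).im) ^ 2) / 4)
          * ((((v 0 - (A 0 0).re) * (v 1 - (A 1 1).re)
                - ((A 0 0).im * (A 1 1).im + ((A 0 1) * (A 1 0)).re)) ^ 2
              + ((v 0 - (A 0 0).re) * (A 1 1).im + (A 0 0).im * (v 1 - (A 1 1).re)
                + ((A 0 1) * (A 1 0)).im) ^ 2)⁻¹) := by
    intro v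
    set M : Matrix (Fin 2) (Fin 2) ℂ := Matrix.diagonal (fun i => (v i : ℂ)) - A with hM
    have hdetM : M.det = ((v 0 : ℂ) - A 0 0) * ((v 1 : ℂ) - A 1 1) - A 0 1 * A 1 0 := by
      rw [hM, Matrix.det_fin_two]
      simp [Matrix.sub_apply, Matrix.diagonal]
    have hns : Complex.normSq M.det
        = ((v 0 - (A 0 0).re) * (v 1 - (A 1 1).re)
            - ((A 0 0).im * (A 1 1).im + ((A 0 1) * (A 1 0)).re)) ^ 2
          + ((v 0 - (A 0 0).re) * (A 1 1).im + (A 0 0).im * (v 1 - (A 1 1).re)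
            + ((A 0 1) * (A 1 0)).im) ^ 2 := by
      rw [hdetM]
      simp only [Complex.normSq_apply, Complex.sub_re, Complex.sub_im, Complex.mul_re,
        Complex.mul_im, Complex.ofReal_re, Complex.ofReal_im]
      ring
    have hNpos : 0 < Complex.normSq M.det := by
      rw [hns, hp, hq]
      exact N_pos (A 0 0).im (A 1 1).im
        ((A 0 1).re * (A 1 0).re - (A 0 1).im * (A 1 0).im)
        ((A 0 1).re * (A 1 0).im + (A 0 1).im * (A 1 0).re)
        (A 0 0).re (A 1 1).re _ hα hs rfl
        (lt_of_lt_of_le (pow_pos hδpos 2) hkey) (v 0) (v 1)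
    have hdet0 : M.det ≠ 0 := by
      intro h
      rw [h] at hNpos
      simp at hNpos
    have hU : IsUnit M.det := isUnit_iff_ne_zero.2 hdet0
    have hUH : IsUnit Mᴴ.det := by
      rw [Matrix.det_conjTranspose]
      exact isUnit_iff_ne_zero.2 (star_ne_zero.2 hdet0)
    have hst : (star fun i => ((v i : ℂ))) = fun i => ((v i : ℂ)) := by
      funext i
      simp [Complex.star_def, Complex.conj_ofReal]
    have hMH : Mᴴ = Matrix.diagonal (fun i => (v i : ℂ)) - Aᴴ := by
      rw [hM, Matrix.conjTranspose_sub, Matrix.diagonal_conjTranspose, hst]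
    have hsub : Mᴴ - M = A - Aᴴ := by
      rw [hMH, hM]
      abel
    have hdiff : M⁻¹ - (M⁻¹)ᴴ = M⁻¹ * (A - Aᴴ) * (Mᴴ)⁻¹ := by
      rw [Matrix.conjTranspose_nonsing_inv, ← hsub, Matrix.mul_sub, Matrix.sub_mul,
        Matrix.mul_assoc, Matrix.mul_nonsing_inv _ hUH, Matrix.mul_one,
        Matrix.nonsing_inv_mul _ hU, Matrix.one_mul]
    have hAAH : A - Aᴴ = (2 * Complex.I) • matIm A := by
      rw [matIm, smul_smul, mul_inv_cancel₀ h2I, one_smul]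
    have hmatImInv : matIm (M⁻¹) = M⁻¹ * matIm A * (Mᴴ)⁻¹ := by
      rw [matIm, hdiff, hAAH, Matrix.mul_smul, Matrix.smul_mul, smul_smul,
        inv_mul_cancel₀ h2I, one_smul]
    have hdetIm : (matIm (M⁻¹)).det
        = ((Complex.normSq M.det : ℝ) : ℂ)⁻¹ * (matIm A).det := by
      rw [hmatImInv, Matrix.det_mul, Matrix.det_mul, Matrix.det_nonsing_inv,
        Matrix.det_nonsing_inv, Matrix.det_conjTranspose, Ring.inverse_eq_inv,
        Ring.inverse_eq_inv]
      have : (M.det)⁻¹ * (matIm A).det * ((star M.det))⁻¹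
          = (M.det * (starRingEnd ℂ) M.det)⁻¹ * (matIm A).det := by
        rw [Complex.star_def, mul_inv]
        ring
      rw [this, Complex.mul_conj]
    rw [hdetIm, hδc, hns, ← Complex.ofReal_inv, ← Complex.ofReal_mul, Complex.ofReal_re]
    rw [← hns]
    ring
  rw [show (∫ v : Fin 2 → ℝ,
        ((matIm ((Matrix.diagonal (fun i => (v i : ℂ)) - A)⁻¹)).det).re)
      = ∫ v : Fin 2 → ℝ,
        ((A 0 0).im * (A 1 1).im
            - (((A 0 1).re - (A 1 0).re) ^ 2 + ((A 0 1).im + (A 1 0).im) ^ 2) / 4)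
          * ((((v 0 - (A 0 0).re) * (v 1 - (A 1 1).re)
                - ((A 0 0).im * (A 1 1).im + ((A 0 1) * (A 1 0)).re)) ^ 2
              + ((v 0 - (A 0 0).re) * (A 1 1).im + (A 0 0).im * (v 1 - (A 1 1).re)
                + ((A 0 1) * (A 1 0)).im) ^ 2)⁻¹) from by simp_rw [hpoint]]
  have := analysis_aux (A 0 0).im (A 1 1).im ((A 0 1) * (A 1 0)).re ((A 0 1) * (A 1 0)).im
    (A 0 0).re (A 1 1).re
    ((A 0 0).im * (A 1 1).im
      - (((A 0 1).re - (A 1 0).re) ^ 2 + ((A 0 1).im + (A 1 0).im) ^ 2) / 4)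
    hα hs hδpos (by rw [hp, hq]; exact hkey)
  exact this
end

section
/- Let n ≥ 0 and let A be an n×n complex matrix such that Im A is positive definite. Then the integral over (v₁,…,vₙ) ∈ ℝⁿ of det(Im[(diag(v₁,…,vₙ) − A)⁻¹]) is at most πⁿ. -/
open MeasureTheory Matrix Real ComplexOrder

namespace DetIm

lemma star_dotProduct_conjTranspose {m : Type*} [Fintype m] (M : Matrix m m ℂ) (x : m → ℂ) :
    star x ⬝ᵥ Mᴴ *ᵥ x = star (star x ⬝ᵥ M *ᵥ x) := by
  simp only [dotProduct, mulVec, conjTranspose_apply, Pi.star_apply, star_sum, star_mul',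
    star_star]
  simp only [Finset.mul_sum]
  rw [Finset.sum_comm]
  refine Finset.sum_congr rfl fun i _ => Finset.sum_congr rfl fun j _ => by ring

lemma star_dotProduct_matIm {m : Type*} [Fintype m] (M : Matrix m m ℂ) (x : m → ℂ) :
    star x ⬝ᵥ (matIm M) *ᵥ x = (((star x ⬝ᵥ M *ᵥ x).im : ℝ) : ℂ) := by
  rw [matIm, Matrix.smul_mulVec, dotProduct_smul, Matrix.sub_mulVec, dotProduct_sub,
    star_dotProduct_conjTranspose]
  set q := star x ⬝ᵥ M *ᵥ x
  rw [Complex.star_def, Complex.sub_conj]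
  simp [Complex.ext_iff]

lemma matIm_isHermitian {m : Type*} [Fintype m] (M : Matrix m m ℂ) : (matIm M).IsHermitian := by
  unfold Matrix.IsHermitian matIm
  rw [conjTranspose_smul, conjTranspose_sub, conjTranspose_conjTranspose]
  have h : star (2 * Complex.I)⁻¹ = -(2 * Complex.I)⁻¹ := by
    rw [Complex.star_def, map_inv₀]
    simp [Complex.ext_iff]
  rw [h, neg_smul, ← smul_neg, neg_sub]

lemma matIm_submatrix {m l : Type*} (M : Matrix m m ℂ) (f : l → m) :
    matIm (M.submatrix f f) = (matIm M).submatrix f f := by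
  unfold matIm
  rw [conjTranspose_submatrix]
  ext i j
  simp [Matrix.submatrix_apply]


lemma matIm_diag_sub {m : Type*} [Fintype m] [DecidableEq m] (B : Matrix m m ℂ) (d : m → ℝ) :
    matIm (diagonal (fun i => (d i : ℂ)) - B) = -(matIm B) := by
  unfold matIm
  rw [conjTranspose_sub, diagonal_conjTranspose]
  have : star (fun i => (d i : ℂ)) = fun i => (d i : ℂ) := by
    funext i; simp [Complex.star_def, Complex.conj_ofReal]
  rw [this, ← smul_neg]
  congr 1
  abel

lemma cons_zero_ne_zero {m : ℕ} {x : Fin m → ℂ} (hx : x ≠ 0) :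
    (Fin.cons 0 x : Fin (m+1) → ℂ) ≠ 0 := by
  intro h
  apply hx
  funext i
  have := congrFun h i.succ
  simpa using this


lemma isUnit_det_diag_sub {m : Type*} [Fintype m] [DecidableEq m] {B : Matrix m m ℂ}
    (hB : (matIm B).PosDef) (d : m → ℝ) :
    IsUnit (diagonal (fun i => (d i : ℂ)) - B).det := by
  set M := diagonal (fun i => (d i : ℂ)) - B with hM
  rw [isUnit_iff_ne_zero]
  intro h
  obtain ⟨v, hv, hvM⟩ := (Matrix.exists_mulVec_eq_zero_iff).2 h
  have h1 : star v ⬝ᵥ (matIm M) *ᵥ v = 0 := by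
    rw [star_dotProduct_matIm, hvM]
    simp
  rw [hM, matIm_diag_sub, Matrix.neg_mulVec, dotProduct_neg, neg_eq_zero] at h1
  have h2 := hB.dotProduct_mulVec_pos hv
  rw [h1] at h2
  exact lt_irrefl _ h2

lemma posDef_matIm_submatrix_succ {m : ℕ} {A : Matrix (Fin (m+1)) (Fin (m+1)) ℂ}
    (hA : (matIm A).PosDef) : (matIm (A.submatrix Fin.succ Fin.succ)).PosDef := by
  rw [matIm_submatrix]
  refine Matrix.PosDef.of_dotProduct_mulVec_pos (hA.1.submatrix _) fun x hx => ?_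
  have key : star x ⬝ᵥ ((matIm A).submatrix Fin.succ Fin.succ) *ᵥ x
      = star (Fin.cons 0 x : Fin (m+1) → ℂ) ⬝ᵥ (matIm A) *ᵥ (Fin.cons 0 x) := by
    simp [dotProduct, mulVec, Fin.sum_univ_succ]
  rw [key]
  exact hA.dotProduct_mulVec_pos (cons_zero_ne_zero hx)

def splitEquiv (m : ℕ) : Fin m ⊕ Unit ≃ Fin (m+1) where
  toFun := Sum.elim Fin.succ (fun _ => 0)
  invFun := Fin.cases (Sum.inr ()) (fun i => Sum.inl i)
  left_inv := by rintro (i | ⟨⟩) <;> simp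
  right_inv := by
    intro i
    induction i using Fin.cases <;> simp

lemma det_schur {m : ℕ} (C : Matrix (Fin (m+1)) (Fin (m+1)) ℂ)
    (h : IsUnit (C.submatrix Fin.succ Fin.succ).det) :
    C.det = (C.submatrix Fin.succ Fin.succ).det *
      (C 0 0 - (fun j => C 0 j.succ) ⬝ᵥ ((C.submatrix Fin.succ Fin.succ)⁻¹ *ᵥ (fun i => C i.succ 0))) := by
  set C' := C.submatrix Fin.succ Fin.succ with hC'
  have hre : C = (fromBlocks C' (Matrix.of fun i (_ : Unit) => C i.succ 0)
      (Matrix.of fun (_ : Unit) j => C 0 j.succ)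
      (Matrix.of fun (_ : Unit) (_ : Unit) => C 0 0)).submatrix
        (splitEquiv m).symm (splitEquiv m).symm := by
    funext i j
    induction i using Fin.cases <;> induction j using Fin.cases <;> rfl
  haveI : Invertible C' := Matrix.invertibleOfIsUnitDet _ h
  conv_lhs => rw [hre]
  rw [Matrix.det_submatrix_equiv_self, Matrix.det_fromBlocks₁₁]
  congr 1
  rw [Matrix.det_unique, Matrix.invOf_eq_nonsing_inv]
  simp only [Matrix.sub_apply, Matrix.of_apply, Matrix.mul_apply, Matrix.of_apply]
  congr 1
  simp only [dotProduct, mulVec, Finset.mul_sum]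
  rw [Finset.sum_comm]
  refine Finset.sum_congr rfl fun i _ => ?_
  rw [Finset.sum_mul]
  exact Finset.sum_congr rfl fun j _ => by ring


lemma conj_quad {m : Type*} [Fintype m] (M : Matrix m m ℂ) (x y : m → ℂ) :
    star (star x ⬝ᵥ M *ᵥ y) = star y ⬝ᵥ Mᴴ *ᵥ x := by
  simp only [dotProduct, mulVec, conjTranspose_apply, Pi.star_apply, star_sum, star_mul',
    star_star, Finset.mul_sum]
  rw [Finset.sum_comm]
  exact Finset.sum_congr rfl fun i _ => Finset.sum_congr rfl fun j _ => by ring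

lemma cons_one_quadform {m : ℕ} (K : Matrix (Fin (m+1)) (Fin (m+1)) ℂ) (y : Fin m → ℂ) :
    star (Fin.cons 1 y : Fin (m+1) → ℂ) ⬝ᵥ K *ᵥ (Fin.cons 1 y) =
      K 0 0 + (fun j => K 0 j.succ) ⬝ᵥ y + star y ⬝ᵥ (fun i => K i.succ 0)
        + star y ⬝ᵥ (K.submatrix Fin.succ Fin.succ) *ᵥ y := by
  simp only [dotProduct, mulVec, Fin.sum_univ_succ, Fin.cons_zero, Fin.cons_succ,
    Pi.star_apply, star_one, one_mul, mul_one, Matrix.submatrix_apply,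
    Finset.mul_sum, Finset.sum_add_distrib, mul_add]
  ring

lemma quad_decomp_aux {m : ℕ} (K' : Matrix (Fin m) (Fin m) ℂ) (hK' : K'.IsHermitian)
    (kc y w : Fin m → ℂ) (hKw : K' *ᵥ w = kc) (a : ℂ) :
    a + star kc ⬝ᵥ y + star y ⬝ᵥ kc + star y ⬝ᵥ K' *ᵥ y =
      (a - star kc ⬝ᵥ w) + star (y + w) ⬝ᵥ K' *ᵥ (y + w) := by
  have h1 : star kc ⬝ᵥ y = star (star y ⬝ᵥ kc) := star_dotProduct _ _
  have hcross : star w ⬝ᵥ K' *ᵥ y = star kc ⬝ᵥ y := by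
    have h2 := conj_quad K'ᴴ y w
    rw [conjTranspose_conjTranspose] at h2
    rw [← h2, hK', hKw, ← h1]
  have hkcw : star kc ⬝ᵥ w = star w ⬝ᵥ K' *ᵥ w := by
    conv_lhs => rw [← hKw]
    rw [Matrix.star_mulVec, ← Matrix.dotProduct_mulVec, hK']
  rw [star_add, Matrix.mulVec_add, hKw, add_dotProduct, dotProduct_add, dotProduct_add,
    hcross, hkcw, show star w ⬝ᵥ kc = star w ⬝ᵥ K' *ᵥ w by rw [hKw]]
  ring

lemma quad_decomp {m : ℕ} {K : Matrix (Fin (m+1)) (Fin (m+1)) ℂ} (hK : K.IsHermitian)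
    (hdet : IsUnit (K.submatrix Fin.succ Fin.succ).det) (y : Fin m → ℂ) :
    star (Fin.cons 1 y : Fin (m+1) → ℂ) ⬝ᵥ K *ᵥ (Fin.cons 1 y) =
      (K 0 0 - (fun j => K 0 j.succ) ⬝ᵥ
          ((K.submatrix Fin.succ Fin.succ)⁻¹ *ᵥ (fun i => K i.succ 0)))
      + star (y + (K.submatrix Fin.succ Fin.succ)⁻¹ *ᵥ (fun i => K i.succ 0)) ⬝ᵥ
          (K.submatrix Fin.succ Fin.succ) *ᵥ
            (y + (K.submatrix Fin.succ Fin.succ)⁻¹ *ᵥ (fun i => K i.succ 0)) := by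
  have hkr : (fun j => K 0 (Fin.succ j)) = star (fun i => K (Fin.succ i) 0) := by
    funext j
    rw [Pi.star_apply, hK.apply]
  have hKw : (K.submatrix Fin.succ Fin.succ) *ᵥ
      ((K.submatrix Fin.succ Fin.succ)⁻¹ *ᵥ (fun i => K i.succ 0)) = (fun i => K i.succ 0) := by
    rw [Matrix.mulVec_mulVec, Matrix.mul_nonsing_inv _ hdet, Matrix.one_mulVec]
  rw [cons_one_quadform, hkr]
  exact quad_decomp_aux _ (hK.submatrix _) _ y _ hKw _


section Step

variable {m : ℕ} (A : Matrix (Fin (m+1)) (Fin (m+1)) ℂ)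

/-- the lower-right block of `diagonal v - A` -/
noncomputable def subN (v' : Fin m → ℝ) : Matrix (Fin m) (Fin m) ℂ :=
  diagonal (fun i => (v' i : ℂ)) - A.submatrix Fin.succ Fin.succ

/-- the Schur complement parameter `s` -/
noncomputable def sval (v' : Fin m → ℝ) : ℂ :=
  A 0 0 + (fun j => A 0 (Fin.succ j)) ⬝ᵥ ((subN A v')⁻¹ *ᵥ (fun i => A (Fin.succ i) 0))

variable {A}

lemma diag_sub_submatrix (v : Fin (m+1) → ℝ) :
    (diagonal (fun i => (v i : ℂ)) - A).submatrix Fin.succ Fin.succ = subN A (v ∘ Fin.succ) := by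
  funext i j
  by_cases h : i = j
  · subst h; simp [subN, Matrix.submatrix_apply, Matrix.diagonal_apply_eq]
  · have h' : Fin.succ i ≠ Fin.succ j := fun hc => h (Fin.succ_injective _ hc)
    simp [subN, Matrix.submatrix_apply, Matrix.diagonal_apply_ne _ h,
      Matrix.diagonal_apply_ne _ h', Function.comp]

lemma det_diag_sub_eq (hA : (matIm A).PosDef) (v : Fin (m+1) → ℝ) :
    (diagonal (fun i => (v i : ℂ)) - A).det
      = (subN A (v ∘ Fin.succ)).det * ((v 0 : ℂ) - sval A (v ∘ Fin.succ)) := by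
  have hN : IsUnit (subN A (v ∘ Fin.succ)).det :=
    isUnit_det_diag_sub (posDef_matIm_submatrix_succ hA) _
  have h := det_schur (diagonal (fun i => (v i : ℂ)) - A)
    (by rw [diag_sub_submatrix]; exact hN)
  rw [h, diag_sub_submatrix]
  congr 1
  have h0 : (diagonal (fun i => (v i : ℂ)) - A) 0 0 = (v 0 : ℂ) - A 0 0 := by
    simp [Matrix.diagonal_apply_eq]
  have hrow : (fun j : Fin m => (diagonal (fun i => (v i : ℂ)) - A) 0 (Fin.succ j))
      = fun j => -(A 0 (Fin.succ j)) := by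
    funext j
    simp [Matrix.diagonal_apply_ne _ (Fin.succ_ne_zero j).symm]
  have hcol : (fun i : Fin m => (diagonal (fun j => (v j : ℂ)) - A) (Fin.succ i) 0)
      = fun i => -(A (Fin.succ i) 0) := by
    funext i
    simp [Matrix.diagonal_apply_ne _ (Fin.succ_ne_zero i)]
  rw [h0, hrow, hcol, sval]
  have hneg : (fun j : Fin m => -(A 0 (Fin.succ j))) = -(fun j => A 0 (Fin.succ j)) := rfl
  have hneg2 : (fun i : Fin m => -(A (Fin.succ i) 0)) = -(fun i => A (Fin.succ i) 0) := rfl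
  rw [hneg, hneg2, Matrix.mulVec_neg, dotProduct_neg, neg_dotProduct, neg_neg]
  ring

lemma key_facts (hA : (matIm A).PosDef) (v' : Fin m → ℝ) :
    0 < (sval A v').im ∧
      (matIm A).det.re ≤ (sval A v').im * (matIm (A.submatrix Fin.succ Fin.succ)).det.re := by
  have hA' : (matIm (A.submatrix Fin.succ Fin.succ)).PosDef := posDef_matIm_submatrix_succ hA
  have hN : IsUnit (subN A v').det := isUnit_det_diag_sub hA' v'
  set N := subN A v' with hNdef
  set c : Fin m → ℂ := fun i => A (Fin.succ i) 0 with hc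
  set y : Fin m → ℂ := N⁻¹ *ᵥ c with hy
  set φ : Fin (m+1) → ℂ := Fin.cons 1 y with hφ
  have hφne : φ ≠ 0 := by
    intro h
    have := congrFun h 0
    simp [hφ] at this
  set v : Fin (m+1) → ℝ := Fin.cons 0 v' with hv
  set M := diagonal (fun i => (v i : ℂ)) - A with hM
  -- M *ᵥ φ = Pi.single 0 (-(sval A v'))
  have hMφ : M *ᵥ φ = Pi.single 0 (-(sval A v')) := by
    funext i
    induction i using Fin.cases with
    | zero =>
      rw [Pi.single_eq_same]
      simp only [mulVec, dotProduct, Fin.sum_univ_succ, hφ, Fin.cons_zero, Fin.cons_succ]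
      have h0 : M 0 0 = -(A 0 0) := by simp [hM, hv, Matrix.diagonal_apply_eq]
      have hr : ∀ j : Fin m, M 0 (Fin.succ j) = -(A 0 (Fin.succ j)) := fun j => by
        simp [hM, Matrix.diagonal_apply_ne _ (Fin.succ_ne_zero j).symm]
      rw [h0, show sval A v' = A 0 0 + ∑ j, A 0 (Fin.succ j) * y j from rfl]
      simp only [hr, mul_one, neg_mul]
      rw [Finset.sum_neg_distrib]
      ring
    | succ i =>
      rw [Pi.single_eq_of_ne (Fin.succ_ne_zero i)]
      simp only [mulVec, dotProduct, Fin.sum_univ_succ, hφ, Fin.cons_zero, Fin.cons_succ]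
      have h0 : M (Fin.succ i) 0 = -(A (Fin.succ i) 0) := by
        simp [hM, Matrix.diagonal_apply_ne _ (Fin.succ_ne_zero i)]
      have hvs : v ∘ Fin.succ = v' := funext fun i => Fin.cons_succ _ _ _
      have hme : ∀ j, M (Fin.succ i) (Fin.succ j) = N i j := fun j => by
        rw [hM, hNdef, ← hvs, ← diag_sub_submatrix v]
        rfl
      have hNy : ∑ j, N i j * y j = c i := by
        have := congrFun (show N *ᵥ y = c by
          rw [hy, Matrix.mulVec_mulVec, Matrix.mul_nonsing_inv _ hN, Matrix.one_mulVec]) i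
        simpa [mulVec, dotProduct] using this
      rw [h0]
      simp only [hme]
      rw [mul_one]
      rw [hNy]
      ring
  -- the quadratic form value
  have hq1 : star φ ⬝ᵥ M *ᵥ φ = -(sval A v') := by
    rw [hMφ, dotProduct_single]
    simp [hφ]
  have hq2 : star φ ⬝ᵥ (matIm A) *ᵥ φ = (((sval A v').im : ℝ) : ℂ) := by
    have h3 := star_dotProduct_matIm M φ
    rw [hq1, hM, matIm_diag_sub, Matrix.neg_mulVec, dotProduct_neg,
      Complex.neg_im, Complex.ofReal_neg] at h3
    exact neg_injective h3
  have hpos : (0:ℂ) < (((sval A v').im : ℝ) : ℂ) := by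
    rw [← hq2]
    exact hA.dotProduct_mulVec_pos hφne
  have him : 0 < (sval A v').im := Complex.zero_lt_real.mp hpos
  refine ⟨him, ?_⟩
  -- Schur decomposition of the quadratic form of K = matIm A
  have hA'' : ((matIm A).submatrix Fin.succ Fin.succ).PosDef := by
    rw [← matIm_submatrix]; exact hA'
  have hdet4 : (0:ℂ) < ((matIm A).submatrix Fin.succ Fin.succ).det := hA''.det_pos
  have hdetK' : IsUnit ((matIm A).submatrix Fin.succ Fin.succ).det :=
    isUnit_iff_ne_zero.mpr (ne_of_gt hdet4)
  have hquad := quad_decomp hA.1 hdetK' y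
  rw [← hφ, hq2] at hquad
  set scC : ℂ := matIm A 0 0 - (fun j => matIm A 0 j.succ) ⬝ᵥ
      ((matIm A).submatrix Fin.succ Fin.succ)⁻¹ *ᵥ (fun i => matIm A i.succ 0) with hscC
  set z : Fin m → ℂ := y + ((matIm A).submatrix Fin.succ Fin.succ)⁻¹ *ᵥ
      (fun i => matIm A i.succ 0) with hz
  have hQ : 0 ≤ (star z ⬝ᵥ ((matIm A).submatrix Fin.succ Fin.succ) *ᵥ z).re := by
    have := hA''.posSemidef.re_dotProduct_nonneg z
    simpa using this
  have hre : (sval A v').im = scC.re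
      + (star z ⬝ᵥ ((matIm A).submatrix Fin.succ Fin.succ) *ᵥ z).re := by
    have := congrArg Complex.re hquad
    simpa using this
  have hsc_le : scC.re ≤ (sval A v').im := by
    rw [hre]; linarith
  -- determinant factorization of K
  have hdfact := det_schur (matIm A) hdetK'
  rw [← hscC] at hdfact
  have him0 : ((matIm A).submatrix Fin.succ Fin.succ).det.im = 0 ∧
      0 < ((matIm A).submatrix Fin.succ Fin.succ).det.re := by
    rw [Complex.lt_def] at hdet4
    exact ⟨hdet4.2.symm, by simpa using hdet4.1⟩
  rw [matIm_submatrix]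
  calc (matIm A).det.re
      = ((matIm A).submatrix Fin.succ Fin.succ).det.re * scC.re := by
        rw [hdfact, Complex.mul_re, him0.1]; ring
    _ ≤ ((matIm A).submatrix Fin.succ Fin.succ).det.re * (sval A v').im :=
        mul_le_mul_of_nonneg_left hsc_le (le_of_lt him0.2)
    _ = (sval A v').im * ((matIm A).submatrix Fin.succ Fin.succ).det.re := mul_comm _ _

end Step

lemma integral_cauchy_aux {y : ℝ} (hy : 0 < y) (x : ℝ) :
    ∫ t : ℝ, ((t - x)^2 + y^2)⁻¹ = π / y := by
  rw [integral_sub_right_eq_self (μ := volume) (fun u : ℝ => (u^2 + y^2)⁻¹) x]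
  have h1 : ∀ u : ℝ, (u^2 + y^2)⁻¹ = (y^2)⁻¹ * (1 + (u/y)^2)⁻¹ := by
    intro u
    rw [← mul_inv]
    congr 1
    field_simp
    ring
  simp_rw [h1]
  rw [MeasureTheory.integral_const_mul]
  rw [MeasureTheory.Measure.integral_comp_div (fun w : ℝ => (1 + w^2)⁻¹) y]
  rw [integral_univ_inv_one_add_sq, abs_of_pos hy, smul_eq_mul]
  field_simp

lemma integrable_cauchy_aux {y : ℝ} (hy : 0 < y) (x : ℝ) :
    Integrable fun t : ℝ => ((t - x)^2 + y^2)⁻¹ := by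
  have h1 : ∀ u : ℝ, (u^2 + y^2)⁻¹ = (y^2)⁻¹ * (1 + (u/y)^2)⁻¹ := by
    intro u
    rw [← mul_inv]
    congr 1
    field_simp
    ring
  have h2 : Integrable fun u : ℝ => (1 + (u/y)^2)⁻¹ := by
    have := (MeasureTheory.integrable_comp_mul_right_iff
      (fun w : ℝ => (1 + w^2)⁻¹) (R := y⁻¹) (by positivity)).mpr integrable_inv_one_add_sq
    simpa [div_eq_mul_inv] using this
  have h3 : Integrable fun u : ℝ => (u^2 + y^2)⁻¹ := by
    simp_rw [h1]
    exact h2.const_mul _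
  exact h3.comp_sub_right x

lemma lintegral_cauchy {y : ℝ} (hy : 0 < y) (x : ℝ) {c : ℝ} (hc : 0 ≤ c) :
    ∫⁻ t : ℝ, ENNReal.ofReal (c / ((t - x)^2 + y^2)) = ENNReal.ofReal (c * (π / y)) := by
  have hpt : ∀ t : ℝ, c / ((t - x)^2 + y^2) = c * ((t - x)^2 + y^2)⁻¹ := fun t => div_eq_mul_inv _ _
  simp_rw [hpt, ENNReal.ofReal_mul hc]
  rw [lintegral_const_mul' _ _ ENNReal.ofReal_ne_top]
  rw [← MeasureTheory.ofReal_integral_eq_lintegral_ofReal (integrable_cauchy_aux hy x)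
    (Filter.Eventually.of_forall fun t => by positivity)]
  rw [integral_cauchy_aux hy x, ← ENNReal.ofReal_mul hc]

/-- the integrand in closed form -/
noncomputable def gfun {k : ℕ} (A : Matrix (Fin k) (Fin k) ℂ) (v : Fin k → ℝ) : ℝ :=
  (matIm A).det.re / Complex.normSq ((diagonal (fun i => (v i : ℂ)) - A).det)

lemma continuous_det_diag_sub {k : ℕ} (A : Matrix (Fin k) (Fin k) ℂ) :
    Continuous fun v : Fin k → ℝ => (diagonal (fun i => (v i : ℂ)) - A).det := by
  apply Continuous.matrix_det
  apply continuous_matrix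
  intro i j
  by_cases h : i = j
  · subst h
    simp only [Matrix.sub_apply, Matrix.diagonal_apply_eq]
    exact (Complex.continuous_ofReal.comp (continuous_apply i)).sub continuous_const
  · simp only [Matrix.sub_apply, Matrix.diagonal_apply_ne _ h]
    exact continuous_const.sub continuous_const

lemma continuous_gfun {k : ℕ} {A : Matrix (Fin k) (Fin k) ℂ} (hA : (matIm A).PosDef) :
    Continuous (gfun A) := by
  apply continuous_const.div (Complex.continuous_normSq.comp (continuous_det_diag_sub A))
  intro v
  simp only [Function.comp_apply, Ne, Complex.normSq_eq_zero]
  exact isUnit_iff_ne_zero.mp (isUnit_det_diag_sub hA v)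

lemma matIm_inv_det_re {k : ℕ} {A : Matrix (Fin k) (Fin k) ℂ} (hA : (matIm A).PosDef)
    (v : Fin k → ℝ) :
    ((matIm ((diagonal (fun i => (v i : ℂ)) - A)⁻¹)).det).re = gfun A v := by
  set M := diagonal (fun i => (v i : ℂ)) - A with hM
  have hdet : IsUnit M.det := isUnit_det_diag_sub hA v
  have hdetH : IsUnit Mᴴ.det := by
    rw [Matrix.det_conjTranspose, isUnit_iff_ne_zero]
    simpa using isUnit_iff_ne_zero.mp hdet
  have e1 : M⁻¹ * (Mᴴ - M) * Mᴴ⁻¹ = M⁻¹ - Mᴴ⁻¹ := by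
    rw [Matrix.mul_sub, Matrix.sub_mul, Matrix.mul_assoc, Matrix.mul_nonsing_inv _ hdetH,
      Matrix.mul_one, Matrix.nonsing_inv_mul _ hdet, Matrix.one_mul]
  have e2 : (2 * Complex.I)⁻¹ • (Mᴴ - M) = matIm A := by
    have h5 := matIm_diag_sub A v
    rw [← hM] at h5
    rw [show Mᴴ - M = -(M - Mᴴ) from (neg_sub _ _).symm, smul_neg]
    rw [show (2 * Complex.I)⁻¹ • (M - Mᴴ) = matIm M from rfl, h5, neg_neg]
  have e3 : matIm (M⁻¹) = M⁻¹ * (matIm A) * Mᴴ⁻¹ := by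
    rw [show matIm (M⁻¹) = (2 * Complex.I)⁻¹ • (M⁻¹ - (M⁻¹)ᴴ) from rfl,
      Matrix.conjTranspose_nonsing_inv, ← e1, ← e2]
    rw [Matrix.mul_smul, Matrix.smul_mul]
  rw [e3, Matrix.det_mul, Matrix.det_mul, Matrix.det_nonsing_inv, Matrix.det_nonsing_inv,
    Matrix.det_conjTranspose, Ring.inverse_eq_inv, Ring.inverse_eq_inv]
  have e4 : (M.det)⁻¹ * (matIm A).det * (star M.det)⁻¹
      = (matIm A).det * (((Complex.normSq M.det : ℝ) : ℂ))⁻¹ := by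
    rw [← Complex.mul_conj]
    rw [mul_inv]
    ring_nf
    rfl
  rw [e4, ← Complex.ofReal_inv, Complex.mul_re, Complex.ofReal_re, Complex.ofReal_im]
  rw [gfun, div_eq_mul_inv]
  ring

lemma detK_re_pos {k : ℕ} {A : Matrix (Fin k) (Fin k) ℂ} (hA : (matIm A).PosDef) :
    0 < (matIm A).det.re := by
  have h := hA.det_pos
  rw [Complex.lt_def] at h
  simpa using h.1

lemma main_lintegral :
    ∀ (k : ℕ) (A : Matrix (Fin k) (Fin k) ℂ), (matIm A).PosDef →
      ∫⁻ v : Fin k → ℝ, ENNReal.ofReal (gfun A v) ≤ ENNReal.ofReal π ^ k := by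
  intro k
  induction k with
  | zero =>
    intro A hA
    have h1 : ∀ v : Fin 0 → ℝ, gfun A v = 1 := by
      intro v
      rw [gfun]
      simp [Matrix.det_fin_zero]
    simp_rw [h1]
    rw [lintegral_const]
    have h2 : (volume : Measure (Fin 0 → ℝ)) Set.univ = 1 := by
      rw [MeasureTheory.volume_pi, Measure.pi_univ]
      simp
    rw [h2]
    simp
  | succ k IH =>
    intro A hA
    have hA' : (matIm (A.submatrix Fin.succ Fin.succ)).PosDef := posDef_matIm_submatrix_succ hA
    set e := MeasurableEquiv.piFinSuccAbove (fun _ : Fin (k+1) => ℝ) 0 with he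
    set F : (Fin (k+1) → ℝ) → ENNReal := fun v => ENNReal.ofReal (gfun A v) with hF
    have hFmeas : Measurable F := ENNReal.measurable_ofReal.comp (continuous_gfun hA).measurable
    have hmp := (volume_preserving_piFinSuccAbove (fun _ : Fin (k+1) => ℝ) 0).symm
    -- inner bound
    have hinner : ∀ v' : Fin k → ℝ, (∫⁻ t : ℝ, F (e.symm (t, v')))
        ≤ ENNReal.ofReal π * ENNReal.ofReal (gfun (A.submatrix Fin.succ Fin.succ) v') := by
      intro v'
      obtain ⟨hy, hkey⟩ := key_facts hA v'
      have hNdet : IsUnit (subN A v').det := isUnit_det_diag_sub hA' v'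
      have hD : 0 < Complex.normSq (subN A v').det :=
        Complex.normSq_pos.mpr (isUnit_iff_ne_zero.mp hNdet)
      set C : ℝ := (matIm A).det.re with hC
      set C' : ℝ := (matIm (A.submatrix Fin.succ Fin.succ)).det.re with hC'
      set D : ℝ := Complex.normSq (subN A v').det with hD2
      set x : ℝ := (sval A v').re
      set y : ℝ := (sval A v').im
      have hCpos : 0 < C := detK_re_pos hA
      have hC'pos : 0 < C' := detK_re_pos hA'
      have hpt : ∀ t : ℝ, F (e.symm (t, v'))
          = ENNReal.ofReal ((C / D) / ((t - x)^2 + y^2)) := by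
        intro t
        rw [hF]
        congr 1
        have hv : (e.symm (t, v')) = Fin.cons t v' := by
          simp [he, MeasurableEquiv.piFinSuccAbove_symm_apply, Fin.insertNth_zero',
            Fin.consEquiv]
        have hvs : (Fin.cons t v' : Fin (k+1) → ℝ) ∘ Fin.succ = v' :=
          funext fun i => Fin.cons_succ _ _ _
        rw [hv]
        simp only [gfun]
        rw [det_diag_sub_eq hA (Fin.cons t v'), Complex.normSq_mul, hvs, Fin.cons_zero]
        have hns : Complex.normSq ((t : ℂ) - sval A v') = (t - x)^2 + y^2 := by
          rw [Complex.normSq_apply]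
          simp only [Complex.sub_re, Complex.sub_im, Complex.ofReal_re, Complex.ofReal_im]
          ring
        rw [hns, div_div]
      have hcd : 0 ≤ C / D := le_of_lt (div_pos hCpos hD)
      have gval : gfun (A.submatrix Fin.succ Fin.succ) v' = C' / D := by
        rw [gfun]
        rfl
      calc (∫⁻ t : ℝ, F (e.symm (t, v')))
          = ENNReal.ofReal ((C / D) * (π / y)) := by
            simp_rw [hpt]
            exact lintegral_cauchy hy x hcd
        _ ≤ ENNReal.ofReal (π * (C' / D)) := by
            apply ENNReal.ofReal_le_ofReal
            rw [div_mul_div_comm, div_le_iff₀ (mul_pos hD hy)]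
            have h6 : π * (C' / D) * (D * y) = π * (C' * y) := by
              field_simp
            rw [h6]
            have h7 : C * π = π * C := mul_comm _ _
            rw [h7]
            apply mul_le_mul_of_nonneg_left _ (le_of_lt pi_pos)
            rw [mul_comm C' y]
            exact hkey
        _ = ENNReal.ofReal π * ENNReal.ofReal (gfun (A.submatrix Fin.succ Fin.succ) v') := by
            rw [gval, ENNReal.ofReal_mul (le_of_lt pi_pos)]
    calc (∫⁻ v : Fin (k+1) → ℝ, ENNReal.ofReal (gfun A v))
        = ∫⁻ a : ℝ × (Fin k → ℝ), F (e.symm a) ∂(volume.prod volume) := by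
          rw [← Measure.volume_eq_prod]
          exact (hmp.lintegral_comp hFmeas).symm
      _ = ∫⁻ v' : Fin k → ℝ, ∫⁻ t : ℝ, F (e.symm (t, v')) :=
          lintegral_prod_symm _ ((hFmeas.comp e.symm.measurable).aemeasurable)
      _ ≤ ∫⁻ v' : Fin k → ℝ,
            ENNReal.ofReal π * ENNReal.ofReal (gfun (A.submatrix Fin.succ Fin.succ) v') :=
          lintegral_mono hinner
      _ = ENNReal.ofReal π
          * ∫⁻ v' : Fin k → ℝ, ENNReal.ofReal (gfun (A.submatrix Fin.succ Fin.succ) v') :=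
          lintegral_const_mul' _ _ ENNReal.ofReal_ne_top
      _ ≤ ENNReal.ofReal π * ENNReal.ofReal π ^ k :=
          mul_le_mul_right (IH _ hA') _
      _ = ENNReal.ofReal π ^ (k + 1) := by rw [pow_succ, mul_comm]

end DetIm

open DetIm in
theorem integral_det_im_inv_le (n : ℕ)
    (A : Matrix (Fin n) (Fin n) ℂ) (hA : (matIm A).PosDef) :
    (∫ v : Fin n → ℝ,
        ((matIm ((Matrix.diagonal (fun i => (v i : ℂ)) - A)⁻¹)).det).re)
      ≤ π ^ n := by
  have hpt : ∀ v : Fin n → ℝ,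
      ((matIm ((Matrix.diagonal (fun i => (v i : ℂ)) - A)⁻¹)).det).re = gfun A v :=
    matIm_inv_det_re hA
  simp_rw [hpt]
  have hnn : 0 ≤ᵐ[volume] gfun A := Filter.Eventually.of_forall fun v =>
    div_nonneg (le_of_lt (detK_re_pos hA)) (Complex.normSq_nonneg _)
  rw [MeasureTheory.integral_eq_lintegral_of_nonneg_ae hnn
    (continuous_gfun hA).aestronglyMeasurable]
  apply ENNReal.toReal_le_of_le_ofReal (by positivity)
  calc ∫⁻ v : Fin n → ℝ, ENNReal.ofReal (gfun A v)
      ≤ ENNReal.ofReal π ^ n := main_lintegral n A hA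
    _ = ENNReal.ofReal (π ^ n) := (ENNReal.ofReal_pow (le_of_lt pi_pos) n).symm
end

section
/- Let C be an n×n complex matrix. Then Im C is positive definite if and only if C is invertible and Im(−C⁻¹) is positive definite. -/
open MeasureTheory Matrix Real ComplexOrder

lemma posDef_conj {n : Type*} [Fintype n] [DecidableEq n]
    {A B : Matrix n n ℂ} (hA : A.PosDef) (hB : IsUnit B) : (Bᴴ * A * B).PosDef := by
  refine Matrix.PosDef.of_dotProduct_mulVec_pos ?_ ?_
  · exact Matrix.isHermitian_conjTranspose_mul_mul B hA.1
  · intro x hx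
    have hBx : B *ᵥ x ≠ 0 := by
      intro h
      exact hx (Matrix.mulVec_injective_iff_isUnit.2 hB (by simpa using h))
    simpa only [star_mulVec, dotProduct_mulVec, vecMul_vecMul] using hA.dotProduct_mulVec_pos hBx

lemma matIm_neg_inv {n : Type*} [Fintype n] [DecidableEq n]
    {C : Matrix n n ℂ} (hC : IsUnit C) :
    matIm (-(C⁻¹)) = (C⁻¹)ᴴ * matIm C * C⁻¹ := by
  have h1 : C⁻¹ * C = 1 := Matrix.nonsing_inv_mul C ((Matrix.isUnit_iff_isUnit_det C).1 hC)
  have h2 : C * C⁻¹ = 1 := Matrix.mul_nonsing_inv C ((Matrix.isUnit_iff_isUnit_det C).1 hC)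
  have h1' : (C⁻¹)ᴴ * Cᴴ = 1 := by
    rw [← Matrix.conjTranspose_mul, h2, Matrix.conjTranspose_one]
  simp only [matIm, Matrix.mul_smul, Matrix.smul_mul]
  congr 1
  rw [Matrix.mul_sub, Matrix.sub_mul, Matrix.mul_assoc, h2, Matrix.mul_one, h1',
    Matrix.one_mul]
  simp [Matrix.conjTranspose_neg]
  abel

lemma isUnit_of_matIm_posDef {n : Type*} [Fintype n] [DecidableEq n]
    {C : Matrix n n ℂ} (h : (matIm C).PosDef) : IsUnit C := by
  rw [← Matrix.mulVec_injective_iff_isUnit]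
  intro x y hxy
  by_contra hne
  have hz : x - y ≠ 0 := sub_ne_zero.2 hne
  have hCz : C *ᵥ (x - y) = 0 := by
    rw [Matrix.mulVec_sub, hxy, sub_self]
  have hpos := h.dotProduct_mulVec_pos hz
  have e1 : star (x - y) ⬝ᵥ (C *ᵥ (x - y)) = 0 := by rw [hCz]; simp
  have e2 : star (x - y) ⬝ᵥ (Cᴴ *ᵥ (x - y)) = 0 := by
    rw [dotProduct_mulVec, ← Matrix.star_mulVec, hCz]
    simp
  rw [matIm, Matrix.smul_mulVec, dotProduct_smul, Matrix.sub_mulVec,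
    dotProduct_sub, e1, e2] at hpos
  simp at hpos

theorem posDef_matIm_iff {n : Type*} [Fintype n] [DecidableEq n]
    (C : Matrix n n ℂ) :
    (matIm C).PosDef ↔ IsUnit C ∧ (matIm (-(C⁻¹))).PosDef := by
  constructor
  · intro h
    have hC := isUnit_of_matIm_posDef h
    refine ⟨hC, ?_⟩
    rw [matIm_neg_inv hC]
    exact posDef_conj h (Matrix.isUnit_nonsing_inv_iff.2 hC)
  · rintro ⟨hC, h⟩
    have hd := (Matrix.isUnit_iff_isUnit_det C).1 hC
    have key : matIm C = Cᴴ * matIm (-(C⁻¹)) * C := by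
      rw [matIm_neg_inv hC, ← Matrix.mul_assoc, ← Matrix.mul_assoc,
        ← Matrix.conjTranspose_mul, Matrix.nonsing_inv_mul C hd,
        Matrix.conjTranspose_one, Matrix.one_mul, Matrix.mul_assoc,
        Matrix.nonsing_inv_mul C hd, Matrix.mul_one]
    rw [key]
    exact posDef_conj h hC
end

section
/- Let C be an n×n Hermitian positive definite complex matrix (n ≥ 1), let c_{nn} be its last diagonal entry, and let Ĉ be the (n−1)×(n−1) principal submatrix obtained by deleting the last row and column. Then det C ≤ c_{nn} · det Ĉ. -/
open Matrix ComplexOrder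

lemma posDef_submatrix_castSucc {n : ℕ} {C : Matrix (Fin (n + 1)) (Fin (n + 1)) ℂ}
    (hC : C.PosDef) : (C.submatrix Fin.castSucc Fin.castSucc).PosDef := by
  rw [posDef_iff_dotProduct_mulVec]
  constructor
  · have := hC.1
    rw [IsHermitian, conjTranspose_submatrix, this.eq]
  · intro x hx
    set y : Fin (n + 1) → ℂ := Fin.snoc x 0 with hy
    have hyne : y ≠ 0 := by
      intro h
      apply hx
      funext i
      have := congrFun h (Fin.castSucc i)
      simpa [hy] using this
    have key : star x ⬝ᵥ (C.submatrix Fin.castSucc Fin.castSucc) *ᵥ x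
        = star y ⬝ᵥ C *ᵥ y := by
      simp [dotProduct, mulVec, Fin.sum_univ_castSucc, hy]
    rw [key]
    exact hC.dotProduct_mulVec_pos hyne

lemma entry_nonneg {m : Type*} [Fintype m] [DecidableEq m] {S : Matrix m m ℂ}
    (hS : S.PosSemidef) (i : m) : 0 ≤ S i i := by
  have := hS.dotProduct_mulVec_nonneg (Pi.single i 1)
  simpa [dotProduct, mulVec, Pi.single_apply] using this

theorem det_le_entry_mul_det_submatrix (n : ℕ)
    (C : Matrix (Fin (n + 1)) (Fin (n + 1)) ℂ) (hC : C.PosDef) :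
    C.det.re ≤ (C (Fin.last n) (Fin.last n)).re *
      (C.submatrix Fin.castSucc Fin.castSucc).det.re := by
  set A := C.submatrix Fin.castSucc Fin.castSucc with hA_def
  have hA : A.PosDef := posDef_submatrix_castSucc hC
  haveI : Invertible A := hA.isUnit.invertible
  set e : Fin n ⊕ Fin 1 ≃ Fin (n + 1) := finSumFinEquiv with he
  set M := C.submatrix e e with hM_def
  have hlast : e (Sum.inr 0) = Fin.last n := by
    apply Fin.ext
    simp [he, Fin.last]
  have hcast : ∀ i : Fin n, e (Sum.inl i) = Fin.castSucc i := fun i => rfl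
  set B := M.toBlocks₁₂ with hB_def
  set D := M.toBlocks₂₂ with hD_def
  have hMblocks : M = fromBlocks A B Bᴴ D := by
    ext i j
    cases i with
    | inl i =>
      cases j with
      | inl j => simp [hM_def, hA_def, hcast]
      | inr j => simp [hM_def, hB_def, toBlocks₁₂]
    | inr i =>
      cases j with
      | inl j =>
        simp only [hM_def, hB_def, submatrix_apply, fromBlocks_apply₂₁, conjTranspose_apply,
          toBlocks₁₂, of_apply]
        rw [hC.1.apply]
      | inr j => simp [hM_def, hD_def, toBlocks₂₂]
  have hMsemi : M.PosSemidef := hC.posSemidef.submatrix e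
  have hSchur : (D - Bᴴ * A⁻¹ * B).PosSemidef :=
    (PosDef.fromBlocks₁₁ B D hA).mp (hMblocks ▸ hMsemi)
  have hdet : C.det = A.det * (D - Bᴴ * A⁻¹ * B).det := by
    have h1 : M.det = C.det := det_submatrix_equiv_self e C
    rw [← h1, hMblocks, det_fromBlocks₁₁, invOf_eq_nonsing_inv]
  have hS00 : (0 : ℂ) ≤ (D - Bᴴ * A⁻¹ * B) 0 0 := entry_nonneg hSchur 0
  have hx00 : (0 : ℂ) ≤ (Bᴴ * A⁻¹ * B) 0 0 :=
    entry_nonneg (hA.inv.posSemidef.conjTranspose_mul_mul_same B) 0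
  have hD00 : D 0 0 = C (Fin.last n) (Fin.last n) := by
    simp [hD_def, toBlocks₂₂, hM_def, hlast]
  have hdetA : 0 < A.det := hA.det_pos
  rw [Complex.lt_def] at hdetA
  have hdetS : (D - Bᴴ * A⁻¹ * B).det = (D - Bᴴ * A⁻¹ * B) 0 0 := det_fin_one _
  rw [Complex.le_def] at hS00 hx00
  have hSsub : (D - Bᴴ * A⁻¹ * B) 0 0 = D 0 0 - (Bᴴ * A⁻¹ * B) 0 0 := by
    simp [Matrix.sub_apply]
  rw [hdet, hdetS, Complex.mul_re]
  have himA : A.det.im = 0 := by simpa using hdetA.2.symm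
  rw [himA, zero_mul, sub_zero]
  have h1 : ((D - Bᴴ * A⁻¹ * B) 0 0).re = (C (Fin.last n) (Fin.last n)).re
      - ((Bᴴ * A⁻¹ * B) 0 0).re := by
    rw [hSsub, Complex.sub_re, hD00]
  rw [h1, mul_comm]
  have := hx00.1
  nlinarith [hdetA.1, hx00.1, mul_le_mul_of_nonneg_right (sub_le_self (C (Fin.last n) (Fin.last n)).re (by simpa using hx00.1)) (le_of_lt hdetA.1)]
end
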